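/- There is a unique real number P such that X̂_∞(P) = X*_∞, namely the asymptotic Pareto optimum price P* := (1 − K_c/K11)·(ρc/b − θ) + (K_c/K11)·(ρh + π). Moreover, if the grid-parity condition ρc/b − θ ≤ ρh + π holds, then ρc/b − θ ≤ P* ≤ ρh + π. -/

import Mathlib

/-- Proposition 4.1, asymptotic Pareto optimum price: with
`X̂_∞(P) = (P + θ − ρc/b)/(2σ²K_c)` and `X*_∞ = (ρh + π + θ − ρc/b)/(2σ²K11)`,
the price `P* = (1 − K_c/K11)·(ρc/b − θ) + (K_c/K11)·(ρh + π)` is the unique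
real number with `X̂_∞(P*) = X*_∞`; moreover under grid parity
`ρc/b − θ ≤ ρh + π` one has `ρc/b − θ ≤ P* ≤ ρh + π`. -/
theorem stmt_15 (ρ σ b : ℝ) (hρ : 0 < ρ) (hσ : 0 < σ) (hb : 0 < b)
    (θ c h π : ℝ) (Kc K11 : ℝ) (hKc : 0 < Kc) (hKcK11 : Kc ≤ K11)
    (Xhat : ℝ → ℝ) (hXhat : ∀ P : ℝ, Xhat P = (P + θ - ρ * c / b) / (2 * σ ^ 2 * Kc))
    (Xstar : ℝ) (hXstar : Xstar = (ρ * h + π + θ - ρ * c / b) / (2 * σ ^ 2 * K11))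
    (Pstar : ℝ)
    (hPstar : Pstar = (1 - Kc / K11) * (ρ * c / b - θ) + (Kc / K11) * (ρ * h + π)) :
    Xhat Pstar = Xstar ∧
      (∀ P : ℝ, Xhat P = Xstar → P = Pstar) ∧
      (ρ * c / b - θ ≤ ρ * h + π →
        ρ * c / b - θ ≤ Pstar ∧ Pstar ≤ ρ * h + π) := by
  have hK11 : 0 < K11 := lt_of_lt_of_le hKc hKcK11
  have hσ2 : (σ : ℝ) ^ 2 ≠ 0 := pow_ne_zero _ hσ.ne'
  have heq : Xhat Pstar = Xstar := by
    rw [hXhat, hXstar, hPstar]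
    field_simp
    ring
  refine ⟨heq, ?_, ?_⟩
  · intro P hP
    rw [hXhat, hXstar] at hP
    rw [hPstar]
    field_simp at hP
    have hne : (2 * σ ^ 2 * b) ≠ 0 := by positivity
    have key : ((P + θ) * b - ρ * c) * K11 = ((ρ * h + π + θ) * b - ρ * c) * Kc := by
      have h2 : (((P + θ) * b - ρ * c) * K11) * (2 * σ ^ 2 * b)
          = (((ρ * h + π + θ) * b - ρ * c) * Kc) * (2 * σ ^ 2 * b) := by
        linear_combination (2 * σ ^ 2 * b) * hP
      exact mul_right_cancel₀ hne h2
    field_simp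
    linear_combination key
  · intro hgp
    have hr : 0 ≤ Kc / K11 := div_nonneg hKc.le hK11.le
    have hr1 : Kc / K11 ≤ 1 := (div_le_one hK11).mpr hKcK11
    constructor <;> rw [hPstar] <;> nlinarith
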